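/- Let G be a finite simple graph with at least one vertex and let c ≥ 1 be a real number. Then the following are equivalent: (1) there exists an assignment of weights λ_I ∈ [0,1] to the independent sets I of G such that the total weight of all independent sets is at most c and for every vertex v the total weight of the independent sets containing v is at least 1; (2) there exist integers p ≥ q ≥ 1 such that G admits a (p:q)-coloring with p ≤ c·q. -/

import Mathlib

/-- A set of vertices is independent if no two of its elements are adjacent. -/
def IsIndepSet {V : Type*} (G : SimpleGraph V) (S : Set V) : Prop :=
  ∀ u ∈ S, ∀ w ∈ S, ¬ G.Adj u w

/-- A `(p:q)`-coloring of `G`: each vertex gets a set of at least `q` colors out of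
`p` colors, with adjacent vertices receiving disjoint sets. -/
def HasPQColoring {V : Type*} (G : SimpleGraph V) (p q : ℕ) : Prop :=
  ∃ X : V → Finset (Fin p), (∀ v, q ≤ (X v).card) ∧
    ∀ ⦃u v⦄, G.Adj u v → Disjoint (X u) (X v)


set_option linter.unusedSectionVars false
set_option maxHeartbeats 1000000

namespace FMAux
variable {ι : Type*} [Fintype ι] [DecidableEq ι]

abbrev Cons (ι : Type*) : Type _ := (ι → ℚ) × ℚ

variable {K : Type*} [Field K] [LinearOrder K] [IsStrictOrderedRing K]

/-- Evaluation of the linear form of a constraint. -/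
def ceval (C : Cons ι) (x : ι → K) : K := ∑ i, (C.1 i : K) * x i

/-- Satisfaction of a system: each constraint `∑ coeff i * x i ≥ rhs`. -/
def Sat (L : Finset (Cons ι)) (x : ι → K) : Prop := ∀ C ∈ L, (C.2 : K) ≤ ceval C x

def rest (v : ι) (C : Cons ι) (x : ι → K) : K :=
  ∑ i ∈ Finset.univ.erase v, (C.1 i : K) * x i

lemma ceval_eq (v : ι) (C : Cons ι) (x : ι → K) :
    ceval C x = (C.1 v : K) * x v + rest v C x := by
  rw [ceval, rest, ← Finset.add_sum_erase _ _ (Finset.mem_univ v)]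

lemma rest_update (v : ι) (C : Cons ι) (x : ι → K) (a : K) :
    rest v C (Function.update x v a) = rest v C x := by
  refine Finset.sum_congr rfl fun i hi => ?_
  rw [Function.update_of_ne (Finset.ne_of_mem_erase hi)]

def comb (v : ι) (P N : Cons ι) : Cons ι :=
  (fun i => (-N.1 v) * P.1 i + P.1 v * N.1 i, (-N.1 v) * P.2 + P.1 v * N.2)

lemma comb_coeff (v : ι) (P N : Cons ι) (i : ι) :
    ((comb v P N).1 i : K) = (-(N.1 v : K)) * (P.1 i : K) + (P.1 v : K) * (N.1 i : K) := by
  simp only [comb]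
  push_cast
  ring

lemma comb_rhs (v : ι) (P N : Cons ι) :
    ((comb v P N).2 : K) = (-(N.1 v : K)) * (P.2 : K) + (P.1 v : K) * (N.2 : K) := by
  simp only [comb]
  push_cast
  ring

lemma comb_coeff_v (v : ι) (P N : Cons ι) : (comb v P N).1 v = 0 := by
  simp only [comb]
  ring

lemma rest_comb (v : ι) (P N : Cons ι) (x : ι → K) :
    rest v (comb v P N) x = (-(N.1 v : K)) * rest v P x + (P.1 v : K) * rest v N x := by
  simp only [rest, Finset.mul_sum, ← Finset.sum_add_distrib]
  refine Finset.sum_congr rfl fun i _ => ?_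
  rw [comb_coeff]
  ring

def elim1 (v : ι) (L : Finset (Cons ι)) : Finset (Cons ι) :=
  (L.filter fun C => C.1 v = 0) ∪
  (((L.filter fun C => 0 < C.1 v) ×ˢ (L.filter fun C => C.1 v < 0)).image
    fun PN => comb v PN.1 PN.2)

lemma elim1_coeff_v (v : ι) (L : Finset (Cons ι)) : ∀ C ∈ elim1 v L, C.1 v = 0 := by
  intro C hC
  rcases Finset.mem_union.mp hC with h | h
  · exact (Finset.mem_filter.mp h).2
  · obtain ⟨PN, _, rfl⟩ := Finset.mem_image.mp h
    exact comb_coeff_v v PN.1 PN.2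

lemma elim1_coeff_other (v w : ι) (L : Finset (Cons ι))
    (h : ∀ C ∈ L, C.1 w = 0) : ∀ C ∈ elim1 v L, C.1 w = 0 := by
  intro C hC
  rcases Finset.mem_union.mp hC with h' | h'
  · exact h C (Finset.mem_filter.mp h').1
  · obtain ⟨PN, hPN, rfl⟩ := Finset.mem_image.mp h'
    have h1 := h PN.1 (Finset.mem_filter.mp (Finset.mem_product.mp hPN).1).1
    have h2 := h PN.2 (Finset.mem_filter.mp (Finset.mem_product.mp hPN).2).1
    simp [comb, h1, h2]

lemma sat_elim1_iff (v : ι) (L : Finset (Cons ι)) (x : ι → K) :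
    (∃ a : K, Sat L (Function.update x v a)) ↔ Sat (elim1 v L) x := by
  constructor
  · rintro ⟨a, ha⟩ C hC
    rcases Finset.mem_union.mp hC with h | h
    · obtain ⟨hCL, hC0⟩ := Finset.mem_filter.mp h
      have h1 := ha C hCL
      rw [ceval_eq v, rest_update, hC0] at h1
      rw [ceval_eq v (x := x), hC0]
      push_cast at h1 ⊢
      linarith
    · obtain ⟨PN, hPN, rfl⟩ := Finset.mem_image.mp h
      obtain ⟨hP, hN⟩ := Finset.mem_product.mp hPN
      obtain ⟨hPL, hPv⟩ := Finset.mem_filter.mp hP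
      obtain ⟨hNL, hNv⟩ := Finset.mem_filter.mp hN
      set P := PN.1; set N := PN.2
      have hpvK : (0:K) < (P.1 v : K) := by exact_mod_cast hPv
      have hnvK : (N.1 v : K) < 0 := by exact_mod_cast hNv
      have h1 := ha P hPL
      have h2 := ha N hNL
      rw [ceval_eq v, rest_update] at h1 h2
      simp only [Function.update_self] at h1 h2
      rw [ceval_eq v, comb_coeff_v, rest_comb, comb_rhs]
      have e1 : (-(N.1 v : K)) * (P.2 : K) ≤ (-(N.1 v : K)) * ((P.1 v : K) * a + rest v P x) :=
        mul_le_mul_of_nonneg_left h1 (by linarith)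
      have e2 : (P.1 v : K) * (N.2 : K) ≤ (P.1 v : K) * ((N.1 v : K) * a + rest v N x) :=
        mul_le_mul_of_nonneg_left h2 hpvK.le
      push_cast
      nlinarith [e1, e2]
  · intro hs
    classical
    set pos := L.filter (fun C => 0 < C.1 v) with hpos
    set neg := L.filter (fun C => C.1 v < 0) with hneg
    set bnd : Cons ι → K := fun C => ((C.2 : K) - rest v C x) / (C.1 v : K) with hbnd
    have key : ∀ P ∈ pos, ∀ N ∈ neg, bnd P ≤ bnd N := by
      intro P hP N hN
      have hPv := (Finset.mem_filter.mp hP).2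
      have hNv := (Finset.mem_filter.mp hN).2
      have hpvK : (0:K) < (P.1 v : K) := by exact_mod_cast hPv
      have hnvK : (N.1 v : K) < 0 := by exact_mod_cast hNv
      have hmem : comb v P N ∈ elim1 v L := by
        apply Finset.mem_union_right
        exact Finset.mem_image.mpr ⟨(P, N),
          Finset.mem_product.mpr ⟨Finset.mem_filter.mpr ⟨(Finset.mem_filter.mp hP).1, hPv⟩,
            Finset.mem_filter.mpr ⟨(Finset.mem_filter.mp hN).1, hNv⟩⟩, rfl⟩
      have hcombo := hs _ hmem
      rw [ceval_eq v, comb_coeff_v, rest_comb, comb_rhs] at hcombo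
      push_cast at hcombo
      have e1 : bnd P * (P.1 v : K) = (P.2 : K) - rest v P x :=
        div_mul_cancel₀ _ (ne_of_gt hpvK)
      have e2 : bnd N * (N.1 v : K) = (N.2 : K) - rest v N x :=
        div_mul_cancel₀ _ (ne_of_lt hnvK)
      have e : (P.1 v : K) * (-(N.1 v : K)) * (bnd P - bnd N)
          = (-(N.1 v : K)) * (bnd P * (P.1 v : K)) + (P.1 v : K) * (bnd N * (N.1 v : K)) := by
        ring
      rw [e1, e2] at e
      have h0 : (P.1 v : K) * (-(N.1 v : K)) * (bnd P - bnd N) ≤ 0 := by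
        rw [e]; linarith
      have hpos2 : (0:K) < (P.1 v : K) * (-(N.1 v : K)) := mul_pos hpvK (by linarith)
      by_contra hcon
      push_neg at hcon
      have := mul_pos hpos2 (sub_pos.mpr hcon)
      linarith
    have main : ∀ a : K, (∀ P ∈ pos, bnd P ≤ a) → (∀ N ∈ neg, a ≤ bnd N) →
        Sat L (Function.update x v a) := by
      intro a hap han C hC
      rcases lt_trichotomy (C.1 v) 0 with hlt | heq | hgt
      · have hCneg : C ∈ neg := Finset.mem_filter.mpr ⟨hC, hlt⟩
        have hcvK : (C.1 v : K) < 0 := by exact_mod_cast hlt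
        have h := han C hCneg
        have e : bnd C * (C.1 v : K) = (C.2 : K) - rest v C x :=
          div_mul_cancel₀ _ (ne_of_lt hcvK)
        rw [ceval_eq v, rest_update]
        simp only [Function.update_self]
        have h2 : bnd C * (C.1 v : K) ≤ a * (C.1 v : K) :=
          mul_le_mul_of_nonpos_right h hcvK.le
        linarith
      · have hCk : C ∈ elim1 v L :=
          Finset.mem_union_left _ (Finset.mem_filter.mpr ⟨hC, heq⟩)
        have h2 := hs C hCk
        rw [ceval_eq v (x := x), heq] at h2
        rw [ceval_eq v, rest_update, heq]
        push_cast at h2 ⊢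
        linarith
      · have hCpos : C ∈ pos := Finset.mem_filter.mpr ⟨hC, hgt⟩
        have hcvK : (0:K) < (C.1 v : K) := by exact_mod_cast hgt
        have h := hap C hCpos
        have e : bnd C * (C.1 v : K) = (C.2 : K) - rest v C x :=
          div_mul_cancel₀ _ (ne_of_gt hcvK)
        rw [ceval_eq v, rest_update]
        simp only [Function.update_self]
        have h2 : bnd C * (C.1 v : K) ≤ a * (C.1 v : K) :=
          mul_le_mul_of_nonneg_right h hcvK.le
        linarith
    by_cases hp : pos.Nonempty
    · refine ⟨pos.sup' hp bnd, main _ (fun P hP => Finset.le_sup' bnd hP) ?_⟩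
      intro N hN
      exact Finset.sup'_le hp bnd fun P hP => key P hP N hN
    · by_cases hn : neg.Nonempty
      · refine ⟨neg.inf' hn bnd, main _ ?_ (fun N hN => Finset.inf'_le bnd hN)⟩
        intro P hP
        exact absurd ⟨P, hP⟩ hp
      · refine ⟨0, main 0 ?_ ?_⟩
        · intro P hP; exact absurd ⟨P, hP⟩ hp
        · intro N hN; exact absurd ⟨N, hN⟩ hn

def elimList : List ι → Finset (Cons ι) → Finset (Cons ι)
  | [], L => L
  | v :: vs, L => elimList vs (elim1 v L)

lemma elimList_preserve (vs : List ι) (L : Finset (Cons ι)) (w : ι)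
    (h : ∀ C ∈ L, C.1 w = 0) : ∀ C ∈ elimList vs L, C.1 w = 0 := by
  induction vs generalizing L with
  | nil => exact h
  | cons v vs ih => exact ih _ (elim1_coeff_other v w L h)

lemma elimList_coeff (vs : List ι) (L : Finset (Cons ι)) (w : ι) (hw : w ∈ vs) :
    ∀ C ∈ elimList vs L, C.1 w = 0 := by
  induction vs generalizing L with
  | nil => cases hw
  | cons v vs ih =>
    rcases List.mem_cons.mp hw with rfl | hw'
    · exact elimList_preserve vs _ w (elim1_coeff_v w L)
    · exact ih _ hw'

lemma sat_elimList_iff (vs : List ι) (L : Finset (Cons ι)) (x : ι → K) :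
    (∃ y : ι → K, (∀ i, i ∉ vs → y i = x i) ∧ Sat L y) ↔ Sat (elimList vs L) x := by
  induction vs generalizing L x with
  | nil =>
    constructor
    · rintro ⟨y, hy, hs⟩
      have : y = x := funext fun i => hy i List.not_mem_nil
      rwa [this] at hs
    · intro hs
      exact ⟨x, fun i _ => rfl, hs⟩
  | cons v vs ih =>
    show _ ↔ Sat (elimList vs (elim1 v L)) x
    rw [← ih]
    constructor
    · rintro ⟨z, hz, hsat⟩
      refine ⟨Function.update z v (x v), ?_, ?_⟩
      · intro i hi
        by_cases hiv : i = v
        · subst hiv; simp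
        · rw [Function.update_of_ne hiv]
          exact hz i (by simp [List.mem_cons, hiv, hi])
      · apply (sat_elim1_iff v L _).mp
        refine ⟨z v, ?_⟩
        have : Function.update (Function.update z v (x v)) v (z v) = z := by
          funext i
          by_cases hiv : i = v
          · subst hiv; simp
          · simp [Function.update_of_ne hiv]
        rwa [this]
    · rintro ⟨y, hy, hsy⟩
      obtain ⟨a, ha⟩ := (sat_elim1_iff v L y).mpr hsy
      refine ⟨Function.update y v a, ?_, ha⟩
      intro i hi
      have hiv : i ≠ v := fun h => hi (h ▸ List.mem_cons_self (a := v) (l := vs))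
      rw [Function.update_of_ne hiv]
      exact hy i fun h => hi (List.mem_cons_of_mem v h)

lemma sat_cast (L : Finset (Cons ι)) (x : ι → ℚ) :
    Sat (K := ℝ) L (fun i => (x i : ℝ)) ↔ Sat (K := ℚ) L x := by
  constructor
  · intro h C hC
    have := h C hC
    simp only [ceval] at this ⊢
    exact_mod_cast this
  · intro h C hC
    have := h C hC
    simp only [ceval] at this ⊢
    exact_mod_cast this

end FMAux

namespace FCAux

open FMAux Finset

variable {V : Type*} [Fintype V] [DecidableEq V]

abbrev ix (V : Type*) := Option (Finset V)

def consNonneg (I : Finset V) : Cons (ix V) :=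
  (fun j => if j = some I then 1 else 0, 0)

def consLeOne (I : Finset V) : Cons (ix V) :=
  (fun j => if j = some I then -1 else 0, -1)

def consZero (I : Finset V) : Cons (ix V) :=
  (fun j => if j = some I then -1 else 0, 0)

def consVert (v : V) : Cons (ix V) :=
  (fun j => Option.casesOn j 0 (fun I => if v ∈ I then 1 else 0), 1)

def consTot : Cons (ix V) :=
  (fun j => Option.casesOn j 1 (fun _ => -1), 0)

open scoped Classical in
noncomputable def sys (G : SimpleGraph V) : Finset (Cons (ix V)) :=
  (univ.image consNonneg) ∪ (univ.image consLeOne) ∪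
    ((univ.filter fun I : Finset V => ¬ IsIndepSet G (I : Set V)).image consZero) ∪
    (univ.image consVert) ∪ {consTot}

variable {K : Type*} [Field K] [LinearOrder K] [IsStrictOrderedRing K]

lemma ceval_single (I : Finset V) (r : ℚ) (x : ix V → K) :
    ceval ((fun j => if j = some I then r else 0, (0:ℚ)) : Cons (ix V)) x
      = (r : K) * x (some I) := by
  simp only [ceval]
  rw [Finset.sum_eq_single (some I)]
  · simp
  · intro b _ hb
    simp [hb]
  · simp

lemma ceval_consNonneg (I : Finset V) (x : ix V → K) :
    ceval (consNonneg I) x = x (some I) := by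
  have := ceval_single (K := K) I 1 x
  simpa [consNonneg] using this

lemma ceval_consLeOne (I : Finset V) (x : ix V → K) :
    ceval (consLeOne I) x = - x (some I) := by
  have h : ceval ((fun j => if j = some I then (-1:ℚ) else 0, (0:ℚ)) : Cons (ix V)) x
      = ((-1 : ℚ) : K) * x (some I) := ceval_single I (-1) x
  have : ceval (consLeOne I) x
      = ceval ((fun j => if j = some I then (-1:ℚ) else 0, (0:ℚ)) : Cons (ix V)) x := rfl
  rw [this, h]; push_cast; ring

lemma ceval_consZero (I : Finset V) (x : ix V → K) :
    ceval (consZero I) x = - x (some I) := by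
  have h : ceval ((fun j => if j = some I then (-1:ℚ) else 0, (0:ℚ)) : Cons (ix V)) x
      = ((-1 : ℚ) : K) * x (some I) := ceval_single I (-1) x
  have : ceval (consZero I) x
      = ceval ((fun j => if j = some I then (-1:ℚ) else 0, (0:ℚ)) : Cons (ix V)) x := rfl
  rw [this, h]; push_cast; ring

lemma ceval_consVert (v : V) (x : ix V → K) :
    ceval (consVert v) x = ∑ I : Finset V, (if v ∈ I then x (some I) else 0) := by
  simp only [ceval, consVert]
  rw [Fintype.sum_option]
  simp only [Rat.cast_zero, zero_mul, zero_add]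
  refine Finset.sum_congr rfl fun I _ => ?_
  by_cases h : v ∈ I <;> simp [h]

lemma ceval_consTot (x : ix V → K) :
    ceval (consTot (V := V)) x = x none - ∑ I : Finset V, x (some I) := by
  simp only [ceval, consTot]
  rw [Fintype.sum_option]
  simp only [Rat.cast_one, one_mul, Rat.cast_neg, neg_mul, Finset.sum_neg_distrib]
  ring

lemma sat_sys_iff (G : SimpleGraph V) (x : ix V → K) :
    Sat (sys G) x ↔
      (∀ I : Finset V, 0 ≤ x (some I)) ∧
      (∀ I : Finset V, x (some I) ≤ 1) ∧
      (∀ I : Finset V, ¬ IsIndepSet G (I : Set V) → x (some I) ≤ 0) ∧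
      (∀ v : V, 1 ≤ ∑ I : Finset V, (if v ∈ I then x (some I) else 0)) ∧
      (∑ I : Finset V, x (some I)) ≤ x none := by
  classical
  constructor
  · intro h
    refine ⟨fun I => ?_, fun I => ?_, fun I hI => ?_, fun v => ?_, ?_⟩
    · have hm : consNonneg I ∈ sys G := by
        simp only [sys, Finset.mem_union]
        exact Or.inl (Or.inl (Or.inl (Or.inl (Finset.mem_image_of_mem _ (Finset.mem_univ I)))))
      have := h _ hm
      rw [ceval_consNonneg] at this
      simpa [consNonneg] using this
    · have hm : consLeOne I ∈ sys G := by
        simp only [sys, Finset.mem_union]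
        exact Or.inl (Or.inl (Or.inl (Or.inr (Finset.mem_image_of_mem _ (Finset.mem_univ I)))))
      have := h _ hm
      rw [ceval_consLeOne] at this
      simp only [consLeOne, Rat.cast_neg, Rat.cast_one] at this
      linarith
    · have hm : consZero I ∈ sys G := by
        simp only [sys, Finset.mem_union]
        exact Or.inl (Or.inl (Or.inr
          (Finset.mem_image_of_mem _ (Finset.mem_filter.mpr ⟨Finset.mem_univ _, hI⟩))))
      have := h _ hm
      rw [ceval_consZero] at this
      simp only [consZero, Rat.cast_zero] at this
      linarith
    · have hm : consVert v ∈ sys G := by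
        simp only [sys, Finset.mem_union]
        exact Or.inl (Or.inr (Finset.mem_image_of_mem _ (Finset.mem_univ v)))
      have := h _ hm
      rw [ceval_consVert] at this
      simpa only [consVert, Rat.cast_one] using this
    · have hm : consTot (V := V) ∈ sys G := by
        simp only [sys, Finset.mem_union]
        exact Or.inr (Finset.mem_singleton_self _)
      have := h _ hm
      rw [ceval_consTot] at this
      simp only [consTot, Rat.cast_zero] at this
      linarith
  · rintro ⟨h1, h2, h3, h4, h5⟩ C hC
    simp only [sys, Finset.mem_union, Finset.mem_image, Finset.mem_singleton,
      Finset.mem_filter, Finset.mem_univ, true_and] at hC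
    rcases hC with ((((⟨I, rfl⟩ | ⟨I, rfl⟩) | ⟨I, hI, rfl⟩) | ⟨v, rfl⟩) | rfl)
    · rw [ceval_consNonneg]
      simpa [consNonneg] using h1 I
    · rw [ceval_consLeOne]
      have := h2 I
      simp only [consLeOne]
      push_cast
      linarith
    · rw [ceval_consZero]
      have := h3 I hI
      simp only [consZero]
      push_cast
      linarith
    · rw [ceval_consVert]
      simpa [consVert] using h4 v
    · rw [ceval_consTot]
      have := h5
      simp only [consTot]
      push_cast
      linarith

end FCAux


open Finset

theorem pq_to_frac {V : Type*} [Fintype V] [DecidableEq V]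
    (G : SimpleGraph V) (c : ℝ) (p q : ℕ) (hq1 : 1 ≤ q)
    (hcol : HasPQColoring G p q) (hpc : (p : ℝ) ≤ c * (q : ℝ)) :
    (∃ lam : Finset V → ℝ,
        (∀ I : Finset V, IsIndepSet G (I : Set V) → 0 ≤ lam I ∧ lam I ≤ 1) ∧
        (∀ I : Finset V, ¬ IsIndepSet G (I : Set V) → lam I = 0) ∧
        (∑ I : Finset V, lam I) ≤ c ∧
        (∀ v : V, 1 ≤ ∑ I : Finset V, if v ∈ I then lam I else 0)) := by
  classical
  obtain ⟨X, hcard, hdisj⟩ := hcol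
  have hq0 : (0:ℝ) < (q:ℝ) := by exact_mod_cast hq1
  set Iset : Fin p → Finset V := fun i => univ.filter (fun v => i ∈ X v) with hIset
  have hIndep : ∀ i : Fin p, IsIndepSet G ((Iset i : Finset V) : Set V) := by
    intro i u hu w hw hadj
    simp only [hIset, coe_filter, Set.mem_setOf_eq, mem_univ, true_and] at hu hw
    exact (Finset.disjoint_left.mp (hdisj hadj)) hu hw
  set cnt : Finset V → ℕ := fun I => (univ.filter fun i : Fin p => Iset i = I).card with hcnt
  set lam : Finset V → ℝ := fun I => min 1 ((cnt I : ℝ) / q) with hlam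
  have hlam_nonneg : ∀ I, 0 ≤ lam I := fun I =>
    le_min zero_le_one (div_nonneg (Nat.cast_nonneg _) hq0.le)
  have hcnt_sum : ∑ I : Finset V, (cnt I : ℝ) = (p : ℝ) := by
    have := Finset.card_eq_sum_card_fiberwise
      (f := Iset) (s := (univ : Finset (Fin p))) (t := (univ : Finset (Finset V)))
      (fun x _ => mem_univ _)
    rw [Finset.card_univ, Fintype.card_fin] at this
    have h2 : (∑ I : Finset V, cnt I) = p := by
      simp only [hcnt]; exact this.symm
    rw [← h2]
    exact (Nat.cast_sum _ _).symm
  refine ⟨lam, fun I _ => ⟨hlam_nonneg I, min_le_left _ _⟩, ?_, ?_, ?_⟩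
  · intro I hI
    have hz : cnt I = 0 := by
      rw [hcnt, Finset.card_eq_zero]
      refine Finset.filter_eq_empty_iff.mpr fun i _ hiI => hI (hiI ▸ hIndep i)
    simp [hlam, hz]
  · calc ∑ I : Finset V, lam I ≤ ∑ I : Finset V, (cnt I : ℝ) / q :=
          Finset.sum_le_sum fun I _ => min_le_right _ _
      _ = (p : ℝ) / q := by rw [← Finset.sum_div, hcnt_sum]
      _ ≤ c := by rw [div_le_iff₀ hq0]; exact hpc
  · intro v
    by_cases hone : ∃ I : Finset V, v ∈ I ∧ 1 ≤ (cnt I : ℝ) / q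
    · obtain ⟨I0, hvI0, hge⟩ := hone
      have hl : lam I0 = 1 := min_eq_left hge
      calc (1:ℝ) = (if v ∈ I0 then lam I0 else 0) := by rw [if_pos hvI0, hl]
        _ ≤ ∑ I : Finset V, if v ∈ I then lam I else 0 :=
          Finset.single_le_sum (f := fun I : Finset V => if v ∈ I then lam I else 0)
            (fun I _ => by positivity) (mem_univ I0)
    · push_neg at hone
      have heq : ∀ I : Finset V, v ∈ I → lam I = (cnt I : ℝ) / q := fun I hvI =>
        min_eq_right (le_of_not_ge (by exact_mod_cast (hone I hvI).not_ge))
      have hXv : ∑ I ∈ univ.filter (fun I : Finset V => v ∈ I), (cnt I : ℝ)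
          = ((X v).card : ℝ) := by
        have hs : (univ.filter fun i : Fin p => i ∈ X v).card
            = ∑ I ∈ univ.filter (fun I : Finset V => v ∈ I),
                ((univ.filter fun i : Fin p => i ∈ X v).filter fun i => Iset i = I).card := by
          apply Finset.card_eq_sum_card_fiberwise
          intro i hi
          simp only [Finset.mem_coe, mem_filter, mem_univ, true_and] at hi ⊢
          simp [hIset, hi]
        have hXc : (univ.filter fun i : Fin p => i ∈ X v) = (X v).attach.image (↑·) := by
          ext i; simp
        have hcard' : (univ.filter fun i : Fin p => i ∈ X v).card = (X v).card := by
          rw [Finset.filter_univ_mem]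
        have hfib : ∀ I ∈ univ.filter (fun I : Finset V => v ∈ I),
            ((univ.filter fun i : Fin p => i ∈ X v).filter fun i => Iset i = I).card = cnt I := by
          intro I hI
          simp only [mem_filter, mem_univ, true_and] at hI
          rw [hcnt]
          congr 1
          rw [Finset.filter_filter]
          apply Finset.filter_congr
          intro i _
          constructor
          · rintro ⟨_, h⟩; exact h
          · intro h
            refine ⟨?_, h⟩
            have : v ∈ Iset i := h ▸ hI
            simpa [hIset] using this
        rw [hs] at hcard'
        rw [Finset.sum_congr rfl hfib] at hcard'
        rw [← hcard']
        exact (Nat.cast_sum _ _).symm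
      have : ∑ I : Finset V, (if v ∈ I then lam I else 0)
          = (∑ I ∈ univ.filter (fun I : Finset V => v ∈ I), (cnt I : ℝ)) / q := by
        rw [Finset.sum_div, Finset.sum_filter]
        refine Finset.sum_congr rfl fun I _ => ?_
        by_cases h : v ∈ I
        · simp [h, heq I h]
        · simp [h]
      rw [this, hXv]
      have := hcard v
      rw [le_div_iff₀ hq0, one_mul]
      exact_mod_cast this


open FMAux Finset in
theorem frac_to_pq {V : Type*} [Fintype V] [DecidableEq V] [Nonempty V]
    (G : SimpleGraph V) (c : ℝ) (hc : 1 ≤ c) (lam : Finset V → ℝ)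
    (hb : ∀ I : Finset V, IsIndepSet G (I : Set V) → 0 ≤ lam I ∧ lam I ≤ 1)
    (hz : ∀ I : Finset V, ¬ IsIndepSet G (I : Set V) → lam I = 0)
    (ht : (∑ I : Finset V, lam I) ≤ c)
    (hv : ∀ v : V, 1 ≤ ∑ I : Finset V, if v ∈ I then lam I else 0) :
    ∃ p q : ℕ, 1 ≤ q ∧ q ≤ p ∧ HasPQColoring G p q ∧ (p : ℝ) ≤ c * (q : ℝ) := by
  classical
  open FCAux in
  set xR : ix V → ℝ := fun j => Option.elim j c lam with hxR
  have hlam_nonneg : ∀ I : Finset V, 0 ≤ lam I := by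
    intro I
    by_cases h : IsIndepSet G (I : Set V)
    · exact (hb I h).1
    · rw [hz I h]
  have hsatR : Sat (sys G) xR := by
    refine (sat_sys_iff G xR).mpr ⟨fun I => hlam_nonneg I, fun I => ?_, fun I h => ?_, hv, ht⟩
    · by_cases h : IsIndepSet G (I : Set V)
      · exact (hb I h).2
      · show lam I ≤ 1
        rw [hz I h]; exact zero_le_one
    · show lam I ≤ 0
      rw [hz I h]
  set vs : List (ix V) := (univ : Finset (Finset V)).toList.map some with hvs
  have hnone : (none : ix V) ∉ vs := by simp [hvs]
  have hsome : ∀ I : Finset V, some I ∈ vs := by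
    intro I
    simp [hvs, Finset.mem_toList]
  set R := elimList vs (sys G) with hR
  have hzero : ∀ C ∈ R, ∀ I : Finset V, C.1 (some I) = 0 :=
    fun C hC I => elimList_coeff vs _ (some I) (hsome I) C hC
  have hceval : ∀ {K : Type} [Field K] [LinearOrder K] [IsStrictOrderedRing K], ∀ C ∈ R, ∀ (x : ix V → K),
      ceval C x = (C.1 none : K) * x none := by
    intro K _ _ _ C hC x
    rw [ceval, Fintype.sum_option]
    have : ∀ I : Finset V, (C.1 (some I) : K) * x (some I) = 0 := by
      intro I
      rw [hzero C hC I]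
      simp
    rw [Finset.sum_congr rfl fun I _ => this I]
    simp
  have hsatRres : Sat R xR :=
    (sat_elimList_iff vs (sys G) xR).mp ⟨xR, fun i _ => rfl, hsatR⟩
  set Pos := R.filter (fun C => 0 < C.1 none) with hPosdef
  have hPos : Pos.Nonempty := by
    by_contra hemp
    have hle : ∀ C ∈ R, C.1 none ≤ 0 := fun C hC =>
      le_of_not_gt fun h => hemp ⟨C, Finset.mem_filter.mpr ⟨hC, h⟩⟩
    set t0 : ℝ := min c 1 - 1 with ht0
    have ht0c : t0 ≤ c := by
      have := min_le_left c 1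
      simp only [ht0]; linarith
    have ht0lt : t0 < 1 := by
      have := min_le_right c 1
      simp only [ht0]; linarith
    set x0 : ix V → ℝ := fun j => Option.elim j t0 lam with hx0
    have hsat0 : Sat R x0 := by
      intro C hC
      rw [hceval C hC]
      have h1 := hsatRres C hC
      rw [hceval C hC] at h1
      have hcle : (C.1 none : ℝ) ≤ 0 := by exact_mod_cast hle C hC
      have h2 : (C.1 none : ℝ) * c ≤ (C.1 none : ℝ) * t0 :=
        mul_le_mul_of_nonpos_left ht0c hcle
      show (C.2 : ℝ) ≤ (C.1 none : ℝ) * t0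
      have hxRnone : xR none = c := rfl
      rw [hxRnone] at h1
      linarith
    obtain ⟨y, hy, hsy⟩ := (sat_elimList_iff vs (sys G) x0).mpr hsat0
    have hynone : y none = t0 := hy none hnone
    obtain ⟨g1, g2, g3, g4, g5⟩ := (sat_sys_iff G y).mp hsy
    obtain ⟨v0⟩ := ‹Nonempty V›
    have hA := g4 v0
    have hB : ∑ I : Finset V, (if v0 ∈ I then y (some I) else 0) ≤ ∑ I : Finset V, y (some I) :=
      Finset.sum_le_sum fun I _ => by
        by_cases h : v0 ∈ I
        · simp [h]
        · simp [h, g1 I]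
    rw [hynone] at g5
    linarith
  set bndQ : Cons (ix V) → ℚ := fun C => C.2 / C.1 none with hbndQ
  set M : ℚ := Pos.sup' hPos bndQ with hM
  have hMc : (M : ℝ) ≤ c := by
    obtain ⟨C0, hC0mem, hC0max⟩ := Finset.exists_mem_eq_sup' hPos bndQ
    obtain ⟨hC0R, hC0pos⟩ := Finset.mem_filter.mp hC0mem
    have h1 := hsatRres C0 hC0R
    rw [hceval C0 hC0R] at h1
    have hxRnone : xR none = c := rfl
    rw [hxRnone] at h1
    have hposR : (0:ℝ) < (C0.1 none : ℝ) := by exact_mod_cast hC0pos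
    rw [hM, hC0max]
    have : ((bndQ C0 : ℚ) : ℝ) = (C0.2 : ℝ) / (C0.1 none : ℝ) := by
      rw [hbndQ]; push_cast; ring
    rw [this, div_le_iff₀ hposR]
    linarith
  have hsatQ : Sat (K := ℚ) R (fun _ => M) := by
    intro C hC
    rw [hceval C hC]
    simp only [Rat.cast_id]
    have h1 := hsatRres C hC
    rw [hceval C hC] at h1
    have hxRnone : xR none = c := rfl
    rw [hxRnone] at h1
    rcases lt_trichotomy (C.1 none) 0 with hlt | heq | hgt
    · have hltR : (C.1 none : ℝ) < 0 := by exact_mod_cast hlt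
      have h2 : (C.1 none : ℝ) * c ≤ (C.1 none : ℝ) * (M : ℝ) :=
        mul_le_mul_of_nonpos_left hMc hltR.le
      have h3 : (C.2 : ℝ) ≤ ((C.1 none * M : ℚ) : ℝ) := by push_cast; linarith
      exact_mod_cast h3
    · have h2 : (C.2 : ℝ) ≤ 0 := by
        rw [heq] at h1; push_cast at h1; linarith
      have h3 : C.2 ≤ 0 := by exact_mod_cast h2
      rw [heq]
      simpa using h3
    · have hCP : C ∈ Pos := Finset.mem_filter.mpr ⟨hC, hgt⟩
      have hble : bndQ C ≤ M := Finset.le_sup' bndQ hCP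
      rw [hbndQ] at hble
      simp only at hble
      rw [div_le_iff₀ hgt] at hble
      linarith
  obtain ⟨y, hy, hsy⟩ := (sat_elimList_iff (K := ℚ) vs (sys G) (fun _ => M)).mpr hsatQ
  have hynone : y none = M := hy none hnone
  obtain ⟨g1, g2, g3, g4, g5⟩ := (sat_sys_iff G y).mp hsy
  rw [hynone] at g5
  set lamQ : Finset V → ℚ := fun I => y (some I) with hlamQ
  set q : ℕ := ∏ I : Finset V, (lamQ I).den with hqdef
  have hq1 : 1 ≤ q := Finset.one_le_prod' fun I _ => (lamQ I).pos
  have hq0Q : (0:ℚ) < (q:ℚ) := by exact_mod_cast hq1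
  set a : Finset V → ℕ :=
    fun I => (lamQ I).num.toNat * ∏ J ∈ univ.erase I, (lamQ J).den with hadef
  have hkey : ∀ I : Finset V, (a I : ℚ) = lamQ I * q := by
    intro I
    have hden : ((lamQ I).den : ℚ) ≠ 0 := by
      exact_mod_cast (lamQ I).pos.ne'
    have hnum : ((lamQ I).num : ℚ) = lamQ I * (lamQ I).den := by
      have h := Rat.num_div_den (lamQ I)
      rwa [div_eq_iff hden] at h
    have htn : (((lamQ I).num.toNat : ℕ) : ℚ) = ((lamQ I).num : ℚ) := by
      exact_mod_cast Int.toNat_of_nonneg (Rat.num_nonneg.mpr (g1 I))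
    calc (a I : ℚ)
        = (((lamQ I).num.toNat : ℕ) : ℚ) * ∏ J ∈ univ.erase I, ((lamQ J).den : ℚ) := by
          rw [hadef]; push_cast; ring
      _ = lamQ I * (((lamQ I).den : ℚ) * ∏ J ∈ univ.erase I, ((lamQ J).den : ℚ)) := by
          rw [htn, hnum]; ring
      _ = lamQ I * q := by
          rw [Finset.mul_prod_erase _ (fun J => (((lamQ J).den : ℕ) : ℚ)) (mem_univ I)]
          rw [hqdef]
          push_cast
          ring
  set p : ℕ := ∑ I : Finset V, a I with hpdef
  have hpQ : (p : ℚ) = q * ∑ I : Finset V, lamQ I := by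
    rw [hpdef, Nat.cast_sum, Finset.sum_congr rfl fun I _ => hkey I, ← Finset.sum_mul]
    ring
  obtain ⟨v0⟩ := ‹Nonempty V›
  have hsum1 : (1:ℚ) ≤ ∑ I : Finset V, lamQ I := by
    refine le_trans (g4 v0) (Finset.sum_le_sum fun I _ => ?_)
    by_cases h : v0 ∈ I
    · simp [h, hlamQ]
    · simp [h, hlamQ, g1 I]
  have hqp : q ≤ p := by
    have : (q:ℚ) ≤ (p:ℚ) := by
      rw [hpQ]
      nlinarith [hsum1, hq0Q]
    exact_mod_cast this
  have hpc : (p : ℝ) ≤ c * q := by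
    have h1 : (p:ℚ) ≤ q * M := by
      rw [hpQ]
      nlinarith [g5, hq0Q]
    have h2 : (p:ℝ) ≤ (q:ℝ) * (M:ℝ) := by exact_mod_cast h1
    have h3 : (q:ℝ) * (M:ℝ) ≤ (q:ℝ) * c :=
      mul_le_mul_of_nonneg_left hMc (by positivity)
    linarith
  have hzeroA : ∀ I : Finset V, ¬ IsIndepSet G (I : Set V) → a I = 0 := by
    intro I hI
    have h0 : lamQ I = 0 := le_antisymm (g3 I hI) (g1 I)
    have h1 : (a I : ℚ) = 0 := by rw [hkey I, h0]; ring
    exact_mod_cast h1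
  have hcardSig : Fintype.card (Σ I : Finset V, Fin (a I)) = p := by
    rw [hpdef]
    simp [Fintype.card_sigma]
  set e := Fintype.equivFinOfCardEq hcardSig with he
  set X : V → Finset (Fin p) := fun v =>
    ((univ : Finset (Σ I : Finset V, Fin (a I))).filter fun σ => v ∈ σ.1).map
      e.toEmbedding with hX
  have hXcard : ∀ v : V, (X v).card = ∑ I ∈ univ.filter (fun I : Finset V => v ∈ I), a I := by
    intro v
    rw [hX]
    simp only [Finset.card_map]
    have hsig : ((univ : Finset (Σ I : Finset V, Fin (a I))).filter fun σ => v ∈ σ.1)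
        = (univ.filter (fun I : Finset V => v ∈ I)).sigma
            (fun I => (univ : Finset (Fin (a I)))) := by
      ext σ
      simp [Finset.mem_sigma]
    rw [hsig, Finset.card_sigma]
    simp
  have hqle : ∀ v : V, q ≤ (X v).card := by
    intro v
    have hQ : (q:ℚ) ≤ ∑ I ∈ univ.filter (fun I : Finset V => v ∈ I), (a I : ℚ) := by
      calc (q:ℚ) = q * 1 := by ring
        _ ≤ q * ∑ I : Finset V, (if v ∈ I then lamQ I else 0) :=
            mul_le_mul_of_nonneg_left (g4 v) hq0Q.le
        _ = ∑ I : Finset V, (if v ∈ I then (a I : ℚ) else 0) := by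
            rw [Finset.mul_sum]
            refine Finset.sum_congr rfl fun I _ => ?_
            by_cases h : v ∈ I
            · simp [h, hkey I]; ring
            · simp [h]
        _ = ∑ I ∈ univ.filter (fun I : Finset V => v ∈ I), (a I : ℚ) :=
            (Finset.sum_filter _ _).symm
    have h2 : (q:ℚ) ≤ ((∑ I ∈ univ.filter (fun I : Finset V => v ∈ I), a I : ℕ) : ℚ) := by
      rw [Nat.cast_sum]
      exact hQ
    have h3 : q ≤ ∑ I ∈ univ.filter (fun I : Finset V => v ∈ I), a I := by exact_mod_cast h2
    rw [hXcard v]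
    exact h3
  have hdisj : ∀ ⦃u w : V⦄, G.Adj u w → Disjoint (X u) (X w) := by
    intro u w hadj
    rw [Finset.disjoint_left]
    intro i hiu hiw
    rw [hX] at hiu hiw
    obtain ⟨σ, hσ, rfl⟩ := Finset.mem_map.mp hiu
    obtain ⟨τ, hτ, hτe⟩ := Finset.mem_map.mp hiw
    have hτσ : τ = σ := e.injective hτe
    subst hτσ
    have hu : u ∈ τ.1 := (Finset.mem_filter.mp hσ).2
    have hw : w ∈ τ.1 := (Finset.mem_filter.mp hτ).2
    by_cases hind : IsIndepSet G (τ.1 : Set V)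
    · exact hind u (Finset.mem_coe.mpr hu) w (Finset.mem_coe.mpr hw) hadj
    · have h0 := hzeroA τ.1 hind
      have h1 := τ.2.isLt
      omega
  exact ⟨p, q, hq1, hqp, ⟨X, hqle, hdisj⟩, hpc⟩

/-- for a finite graph `G` with at least one vertex and a real `c ≥ 1`,
the following are equivalent: (1) there is an assignment of weights `λ_I ∈ [0,1]` to
the independent sets `I` of `G` of total weight at most `c` such that for every
vertex `v` the total weight of the independent sets containing `v` is at least `1`;
(2) there are integers `p ≥ q ≥ 1` such that `G` admits a `(p:q)`-coloring with
`p ≤ c·q`. -/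
theorem fractional_coloring_iff_pq_coloring {V : Type*} [Fintype V] [DecidableEq V]
    [Nonempty V] (G : SimpleGraph V) (c : ℝ) (hc : 1 ≤ c) :
    (∃ lam : Finset V → ℝ,
        (∀ I : Finset V, IsIndepSet G (I : Set V) → 0 ≤ lam I ∧ lam I ≤ 1) ∧
        (∀ I : Finset V, ¬ IsIndepSet G (I : Set V) → lam I = 0) ∧
        (∑ I : Finset V, lam I) ≤ c ∧
        (∀ v : V, 1 ≤ ∑ I : Finset V, if v ∈ I then lam I else 0)) ↔
    (∃ p q : ℕ, 1 ≤ q ∧ q ≤ p ∧ HasPQColoring G p q ∧ (p : ℝ) ≤ c * (q : ℝ)) := by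
  constructor
  · rintro ⟨lam, hb, hz, ht, hv⟩
    exact frac_to_pq G c hc lam hb hz ht hv
  · rintro ⟨p, q, hq1, hqp, hcol, hpc⟩
    exact pq_to_frac G c p q hq1 hcol hpc
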